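/- arXiv:2510.15070 — 2 statements merged into one kernel-verified Lean document; each statement's English description precedes it below -/
import Mathlib

section
/- (Theorem 2, first bullet, matrix form.) Let M ≥ 1 be an integer, Ũ ∈ ℂ^{M×M} with ŨᴴŨ = I_M, W₁, W₂ ∈ ℂ^{M×M} unitary, and α₁, α₂ ∈ (0, π/2) with α₁ ≠ α₂. Define G_i = [cos(α_i)·Ũ ; sin(α_i)·W_i] ∈ ℂ^{2M×M} and Γ = G₁ᴴG₂. Then I_M − ΓᴴΓ is positive definite; equivalently, every singular value of Γ is strictly less than 1, i.e., all the principal angles between the subspaces span(G₁) and span(G₂) are nonzero. -/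
open Matrix
open scoped ComplexOrder

set_option maxHeartbeats 1000000 in
/-- Theorem 2, first bullet, matrix form: for `α₁ ≠ α₂` in `(0, π/2)`,
with `G_i = [cos(α_i)·Ũ ; sin(α_i)·W_i]` and `Γ = G₁ᴴ G₂`, the matrix `I_M − Γᴴ Γ`
is positive definite (every singular value of `Γ` is `< 1`, i.e. all principal
angles between `span(G₁)` and `span(G₂)` are nonzero). -/
theorem stmt_9 (M : ℕ) (hM : 1 ≤ M)
    (U W₁ W₂ : Matrix (Fin M) (Fin M) ℂ)
    (hU : Uᴴ * U = 1)
    (hW₁ : W₁ᴴ * W₁ = 1) (hW₁' : W₁ * W₁ᴴ = 1)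
    (hW₂ : W₂ᴴ * W₂ = 1) (hW₂' : W₂ * W₂ᴴ = 1)
    (α₁ α₂ : ℝ)
    (hα₁ : α₁ ∈ Set.Ioo (0 : ℝ) (Real.pi / 2))
    (hα₂ : α₂ ∈ Set.Ioo (0 : ℝ) (Real.pi / 2))
    (hne : α₁ ≠ α₂)
    (G₁ G₂ : Matrix (Fin M ⊕ Fin M) (Fin M) ℂ)
    (hG₁ : G₁ = Matrix.fromRows
      (((Real.cos α₁ : ℝ) : ℂ) • U) (((Real.sin α₁ : ℝ) : ℂ) • W₁))
    (hG₂ : G₂ = Matrix.fromRows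
      (((Real.cos α₂ : ℝ) : ℂ) • U) (((Real.sin α₂ : ℝ) : ℂ) • W₂))
    (Γ : Matrix (Fin M) (Fin M) ℂ)
    (hΓ : Γ = G₁ᴴ * G₂) :
    (1 - Γᴴ * Γ).PosDef := by
  set a : ℝ := Real.cos α₁ * Real.cos α₂ with ha
  set b : ℝ := Real.sin α₁ * Real.sin α₂ with hb
  set Q : Matrix (Fin M) (Fin M) ℂ := W₁ᴴ * W₂ with hQ
  have hQQ : Qᴴ * Q = 1 := by
    rw [hQ, conjTranspose_mul, conjTranspose_conjTranspose, Matrix.mul_assoc,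
      ← Matrix.mul_assoc W₁, hW₁', Matrix.one_mul, hW₂]
  have hΓ' : Γ = (a : ℂ) • (1 : Matrix (Fin M) (Fin M) ℂ) + (b : ℂ) • Q := by
    rw [hΓ, hG₁, hG₂, conjTranspose_fromRows_eq_fromCols_conjTranspose,
      fromCols_mul_fromRows]
    simp only [conjTranspose_smul, Matrix.smul_mul, Matrix.mul_smul, hU,
      smul_smul]
    rw [← hQ]
    simp only [Complex.star_def, Complex.conj_ofReal, ha, hb, Complex.ofReal_mul]
    rw [mul_comm ((Real.cos α₂ : ℂ)), mul_comm ((Real.sin α₂ : ℂ))]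
  -- positivity facts
  have hca : 0 < Real.cos α₁ := Real.cos_pos_of_mem_Ioo ⟨by linarith [hα₁.1, Real.pi_pos], hα₁.2⟩
  have hcb : 0 < Real.cos α₂ := Real.cos_pos_of_mem_Ioo ⟨by linarith [hα₂.1, Real.pi_pos], hα₂.2⟩
  have hsa : 0 < Real.sin α₁ := Real.sin_pos_of_pos_of_lt_pi hα₁.1 (by linarith [Real.pi_pos, hα₁.2])
  have hsb : 0 < Real.sin α₂ := Real.sin_pos_of_pos_of_lt_pi hα₂.1 (by linarith [Real.pi_pos, hα₂.2])
  have hapos : 0 < a := mul_pos hca hcb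
  have hbpos : 0 < b := mul_pos hsa hsb
  have hab : a + b = Real.cos (α₁ - α₂) := (Real.cos_sub α₁ α₂).symm
  have hablt : a + b < 1 := by
    rw [hab]
    refine lt_of_le_of_ne (Real.cos_le_one _) fun h => ?_
    have hpi := Real.pi_pos
    have := (Real.cos_eq_one_iff_of_lt_of_lt
      (x := α₁ - α₂) (by nlinarith [hα₁.1, hα₁.2, hα₂.1, hα₂.2])
      (by nlinarith [hα₁.1, hα₁.2, hα₂.1, hα₂.2])).mp h
    exact hne (by linarith)
  rw [posDef_iff_dotProduct_mulVec]
  constructor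
  · exact (isHermitian_one).sub (isHermitian_conjTranspose_mul_self Γ)
  · intro x hx
    -- rewrite the quadratic form
    have key : star x ⬝ᵥ ((1 - Γᴴ * Γ) *ᵥ x)
        = star x ⬝ᵥ x - star (Γ *ᵥ x) ⬝ᵥ (Γ *ᵥ x) := by
      rw [Matrix.sub_mulVec, dotProduct_sub, Matrix.one_mulVec,
        ← Matrix.mulVec_mulVec, Matrix.dotProduct_mulVec, ← Matrix.star_mulVec]
    -- Euclidean space machinery
    set e := (WithLp.equiv 2 (Fin M → ℂ)).symm with he
    have hip : ∀ v : Fin M → ℂ, star v ⬝ᵥ v = ((‖e v‖ : ℝ) : ℂ) ^ 2 := by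
      intro v
      have h := inner_self_eq_norm_sq_to_K (𝕜 := ℂ) (e v)
      rw [he] at h ⊢
      exact (dotProduct_comm _ _).trans h
    have hQnorm : ‖e (Q *ᵥ x)‖ = ‖e x‖ := by
      have h2 : ((‖e (Q *ᵥ x)‖ : ℝ) : ℂ) ^ 2 = ((‖e x‖ : ℝ) : ℂ) ^ 2 := by
        rw [← hip, ← hip, Matrix.star_mulVec, Matrix.dotProduct_mulVec,
          Matrix.vecMul_vecMul, hQQ, Matrix.vecMul_one]
      have h3 : (‖e (Q *ᵥ x)‖ : ℝ) ^ 2 = (‖e x‖ : ℝ) ^ 2 := by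
        exact_mod_cast h2
      rcases (Commute.all _ _).sq_eq_sq_iff_eq_or_eq_neg.mp h3 with h | h
      · exact h
      · linarith [norm_nonneg (e (Q *ᵥ x)), norm_nonneg (e x)]
    have hy : Γ *ᵥ x = (a : ℂ) • x + (b : ℂ) • (Q *ᵥ x) := by
      rw [hΓ', Matrix.add_mulVec, Matrix.smul_mulVec, Matrix.smul_mulVec,
        Matrix.one_mulVec]
    have hex : e x ≠ 0 := fun h0 => hx (by
      exact e.injective (h0.trans (by rw [he]; rfl)))
    have hxpos : 0 < ‖e x‖ := norm_pos_iff.mpr hex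
    have hnorm : ‖e (Γ *ᵥ x)‖ < ‖e x‖ := by
      have h1 : ‖e (Γ *ᵥ x)‖ ≤ a * ‖e x‖ + b * ‖e x‖ := by
        rw [hy]
        rw [show e ((a : ℂ) • x + (b : ℂ) • (Q *ᵥ x)) = (a : ℂ) • e x + (b : ℂ) • e (Q *ᵥ x) from rfl]
        refine (norm_add_le _ _).trans ?_
        rw [norm_smul, norm_smul, hQnorm]
        simp [Complex.norm_real, abs_of_pos hapos, abs_of_pos hbpos, le_refl]
      nlinarith
    rw [key, hip, hip, ← Complex.ofReal_pow, ← Complex.ofReal_pow, ← Complex.ofReal_sub,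
      Complex.zero_lt_real]
    have := pow_lt_pow_left₀ hnorm (norm_nonneg _) (two_ne_zero)
    linarith
end

section
/- Let M ≥ 1 be an integer, ω = exp(2πi/M), D = diag(1, ω, …, ω^{M−1}) the clock matrix, S the cyclic shift matrix (S_{jk} = 1 if j ≡ k + 1 (mod M), else 0), and i the imaginary unit. For 0 ≤ a, b < M and ε ∈ {0, 1}, define Δ_{a,b,ε} = [0_M ; (i^ε/√M)·DᵃSᵇ] ∈ ℂ^{2M×M} (zero upper block). Then these 2M² matrices form an orthonormal family with respect to the real inner product g(A, B) = Re tr(AᴴB): g(Δ_{a,b,ε}, Δ_{c,d,δ}) = 1 if (a,b,ε) = (c,d,δ) and 0 otherwise. Moreover, each Δ = Δ_{a,b,ε} satisfies [I_M ; 0_M]ᴴ·Δ = 0 and ΔᴴΔ = (1/M)·I_M, so Δ lies in the tangent space at [U], U = [I_M ; 0_M], and √M·Δ̃ is unitary (the hypotheses of Theorem 1). Hence the family is a g-orthonormal basis of the 2M²-dimensional real tangent space T_{[U]}Gr_ℂ(2M,M). -/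
open Matrix

namespace Stmt16Aux

lemma pow_mod_eq {ζ : ℂ} {M : ℕ} (hζ : ζ ^ M = 1) (x : ℕ) : ζ ^ (x % M) = ζ ^ x := by
  conv_rhs => rw [← Nat.mod_add_div x M, pow_add, pow_mul, hζ, one_pow, mul_one]

lemma sum_zeta {M : ℕ} (hM : 0 < M) {ζ : ℂ} (hζ : ζ ^ M = 1) :
    ∑ j : Fin M, ζ ^ (j : ℕ) = if ζ = 1 then (M : ℂ) else 0 := by
  rw [Fin.sum_univ_eq_sum_range]
  split_ifs with h
  · simp [h]
  · rw [geom_sum_eq h, hζ, sub_self, zero_div]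

lemma shift_pow_apply {M : ℕ} (hM : 0 < M) (S : Matrix (Fin M) (Fin M) ℂ)
    (hS : S = Matrix.of (fun j k : Fin M =>
      if (j : ℕ) = ((k : ℕ) + 1) % M then (1 : ℂ) else 0))
    (b : ℕ) (j k : Fin M) :
    (S ^ b) j k = if (j : ℕ) = ((k : ℕ) + b) % M then 1 else 0 := by
  induction b generalizing k with
  | zero =>
    simp only [pow_zero, Matrix.one_apply, add_zero, Nat.mod_eq_of_lt k.isLt]
    exact if_congr (by rw [Fin.ext_iff]) rfl rfl
  | succ b ih =>
    rw [pow_succ, Matrix.mul_apply]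
    rw [Finset.sum_eq_single (⟨((k : ℕ) + 1) % M, Nat.mod_lt _ hM⟩ : Fin M)]
    · rw [ih, hS]
      simp only [Matrix.of_apply]
      simp only [if_true, mul_one, Nat.mod_add_mod]
      have h : (k : ℕ) + 1 + b = (k : ℕ) + (b + 1) := by omega
      rw [h]
    · intro l _ hl
      rw [hS]
      simp only [Matrix.of_apply]
      rw [if_neg, mul_zero]
      intro h
      exact hl (Fin.ext h)
    · intro h; exact absurd (Finset.mem_univ _) h


lemma DS_apply {M : ℕ} (hM : 0 < M) {ω : ℂ} (D S : Matrix (Fin M) (Fin M) ℂ)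
    (hD : D = Matrix.diagonal (fun j : Fin M => ω ^ (j : ℕ)))
    (hS : S = Matrix.of (fun j k : Fin M =>
      if (j : ℕ) = ((k : ℕ) + 1) % M then (1 : ℂ) else 0))
    (a b : ℕ) (j k : Fin M) :
    (D ^ a * S ^ b) j k
      = ω ^ (a * (j : ℕ)) * (if (j : ℕ) = ((k : ℕ) + b) % M then 1 else 0) := by
  subst hD
  rw [Matrix.diagonal_pow, Matrix.diagonal_mul, shift_pow_apply hM S hS]
  simp only [Pi.pow_apply]
  rw [← pow_mul, mul_comm (j : ℕ) a]

/-- inner indicator sum -/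
lemma sum_indicator {M : ℕ} (hM : 0 < M) (t : ℕ) (ht : t < M) (f : Fin M → ℂ) :
    ∑ j : Fin M, (if (j : ℕ) = t then f j else 0) = f ⟨t, ht⟩ := by
  rw [Finset.sum_eq_single (⟨t, ht⟩ : Fin M)]
  · rw [if_pos rfl]
  · intro l _ hl
    rw [if_neg (fun h => hl (Fin.ext h))]
  · intro h; exact absurd (Finset.mem_univ _) h

lemma conj_pow_mul {ω : ℂ} (hc : star ω = ω⁻¹) (x y n : ℕ) :
    star (ω ^ (x * n)) * ω ^ (y * n) = ((ω ^ x)⁻¹ * ω ^ y) ^ n := by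
  rw [star_pow, hc, mul_pow, ← inv_pow, ← pow_mul, ← pow_mul]

lemma mod_cancel {M : ℕ} {x y : ℕ} (hx : x < M) (hy : y < M) {t : ℕ}
    (h : (t + x) % M = (t + y) % M) : x = y := by
  have h2 : x % M = y % M := Nat.ModEq.add_left_cancel' t h
  have hxm := Nat.mod_eq_of_lt hx
  have hym := Nat.mod_eq_of_lt hy
  omega

lemma trace_DS {M : ℕ} (hM : 0 < M) {ω : ℂ} (hprim : IsPrimitiveRoot ω M)
    (hc : star ω = ω⁻¹)
    {D S : Matrix (Fin M) (Fin M) ℂ}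
    (hDS : ∀ (a b : ℕ) (j k : Fin M), (D ^ a * S ^ b) j k
      = ω ^ (a * (j : ℕ)) * (if (j : ℕ) = ((k : ℕ) + b) % M then 1 else 0))
    (a b c d : Fin M) :
    ((D ^ (a : ℕ) * S ^ (b : ℕ))ᴴ * (D ^ (c : ℕ) * S ^ (d : ℕ))).trace
      = if a = c ∧ b = d then (M : ℂ) else 0 := by
  have hωM : ω ^ M = 1 := hprim.pow_eq_one
  have hω0 : ω ≠ 0 := hprim.ne_zero hM.ne'
  set ζ : ℂ := (ω ^ (a : ℕ))⁻¹ * ω ^ (c : ℕ) with hζdef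
  have hpowM : ∀ n : ℕ, (ω ^ n) ^ M = 1 := fun n => by
    rw [← pow_mul, mul_comm, pow_mul, hωM, one_pow]
  have hζM : ζ ^ M = 1 := by
    rw [hζdef, mul_pow, inv_pow, hpowM, hpowM, inv_one, one_mul]
  have hζ1 : ζ = 1 ↔ a = c := by
    rw [hζdef, inv_mul_eq_one₀ (pow_ne_zero _ hω0)]
    constructor
    · intro h; exact Fin.ext (hprim.pow_inj a.isLt c.isLt h)
    · rintro rfl; rfl
  have htr : ((D ^ (a:ℕ) * S ^ (b:ℕ))ᴴ * (D ^ (c:ℕ) * S ^ (d:ℕ))).trace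
      = ∑ k : Fin M, ∑ j : Fin M,
        star ((D ^ (a:ℕ) * S ^ (b:ℕ)) j k) * (D ^ (c:ℕ) * S ^ (d:ℕ)) j k := by
    simp only [Matrix.trace, Matrix.diag, Matrix.mul_apply,
      Matrix.conjTranspose_apply]
  rw [htr]
  have hinner : ∀ k : Fin M, ∑ j : Fin M,
      star ((D ^ (a:ℕ) * S ^ (b:ℕ)) j k) * (D ^ (c:ℕ) * S ^ (d:ℕ)) j k
      = if b = d then ζ ^ (((k : ℕ) + (b : ℕ)) % M) else 0 := by
    intro k
    have key : ∀ j : Fin M,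
        star ((D ^ (a:ℕ) * S ^ (b:ℕ)) j k) * (D ^ (c:ℕ) * S ^ (d:ℕ)) j k
        = if (j : ℕ) = ((k : ℕ) + (b : ℕ)) % M then
            (if b = d then ζ ^ (j : ℕ) else 0) else 0 := by
      intro j
      rw [hDS, hDS]
      by_cases h1 : (j : ℕ) = ((k : ℕ) + (b : ℕ)) % M
      · rw [if_pos h1]
        by_cases h2 : b = d
        · rw [if_pos h1, if_pos (show (j:ℕ) = ((k:ℕ) + (d:ℕ)) % M by
            rw [← h2]; exact h1), if_pos h2, mul_one, mul_one, conj_pow_mul hc]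
        · rw [if_pos h1, if_neg (show ¬ (j:ℕ) = ((k:ℕ) + (d:ℕ)) % M from
            fun h3 => h2 (Fin.ext (mod_cancel b.isLt d.isLt (h1.symm.trans h3)))),
            if_neg h2, mul_zero, mul_zero]
      · rw [if_neg h1, if_neg h1, mul_zero, star_zero, zero_mul]
    rw [Finset.sum_congr rfl (fun j _ => key j),
      sum_indicator hM _ (Nat.mod_lt _ hM)]
  rw [Finset.sum_congr rfl (fun k _ => hinner k)]
  by_cases hbd : b = d
  · simp only [if_pos hbd]
    have hk : ∀ k : Fin M, ζ ^ (((k:ℕ) + (b:ℕ)) % M) = ζ ^ (k:ℕ) * ζ ^ (b:ℕ) := by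
      intro k; rw [pow_mod_eq hζM, pow_add]
    rw [Finset.sum_congr rfl (fun k _ => hk k), ← Finset.sum_mul, sum_zeta hM hζM]
    by_cases hac : a = c
    · rw [if_pos (hζ1.mpr hac), if_pos ⟨hac, hbd⟩, hζ1.mpr hac, one_pow, mul_one]
    · rw [if_neg (fun h => hac (hζ1.mp h)), if_neg (fun h => hac h.1), zero_mul]
  · simp only [if_neg hbd, if_neg (fun h : a = c ∧ b = d => hbd h.2),
      Finset.sum_const_zero]

lemma DS_unitary {M : ℕ} (hM : 0 < M) {ω : ℂ}
    (hω0 : ω ≠ 0) (hc : star ω = ω⁻¹)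
    {D S : Matrix (Fin M) (Fin M) ℂ}
    (hDS : ∀ (a b : ℕ) (j k : Fin M), (D ^ a * S ^ b) j k
      = ω ^ (a * (j : ℕ)) * (if (j : ℕ) = ((k : ℕ) + b) % M then 1 else 0))
    (a b : ℕ) :
    (D ^ a * S ^ b)ᴴ * (D ^ a * S ^ b) = 1 := by
  ext k l
  rw [Matrix.mul_apply]
  have key : ∀ j : Fin M, ((D ^ a * S ^ b)ᴴ) k j * (D ^ a * S ^ b) j l
      = if (j : ℕ) = ((k : ℕ) + b) % M then
          (if ((k : ℕ) + b) % M = ((l : ℕ) + b) % M then 1 else 0) else 0 := by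
    intro j
    rw [Matrix.conjTranspose_apply, hDS, hDS]
    by_cases h1 : (j : ℕ) = ((k : ℕ) + b) % M
    · rw [if_pos h1]
      by_cases h2 : ((k:ℕ) + b) % M = ((l:ℕ) + b) % M
      · rw [if_pos h1, if_pos (h1.trans h2), if_pos h2, mul_one,
          conj_pow_mul hc, inv_mul_cancel₀ (pow_ne_zero _ hω0), one_pow]
      · rw [if_pos h1, if_neg (fun h3 : (j:ℕ) = ((l:ℕ) + b) % M =>
          h2 (h1.symm.trans h3)), if_neg h2, mul_zero, mul_zero]
    · rw [if_neg h1, if_neg h1, mul_zero, star_zero, zero_mul]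
  rw [Finset.sum_congr rfl (fun j _ => key j), sum_indicator hM _ (Nat.mod_lt _ hM),
    Matrix.one_apply]
  exact if_congr ⟨fun h => Fin.ext (mod_cancel k.isLt l.isLt
    (by rw [Nat.add_comm (k:ℕ) b, Nat.add_comm (l:ℕ) b] at h; exact h)),
    fun h => h ▸ rfl⟩ rfl rfl

end Stmt16Aux

open Stmt16Aux

/-- The `2M²` matrices `Δ_{a,b,ε} = [0_M ; (i^ε/√M)·DᵃSᵇ]`
(`0 ≤ a, b < M`, `ε ∈ {0,1}`, `D` the clock matrix, `S` the cyclic shift matrix)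
form a `g`-orthonormal family w.r.t. `g(A,B) = Re tr(Aᴴ B)`; each of them lies in
the tangent space `{Δ : Uᴴ Δ = 0}` at `U = [I_M ; 0_M]`, satisfies
`Δᴴ Δ = (1/M)·I_M` with `√M·Δ̃` (the rescaled lower block) unitary (the
hypotheses of Theorem 1), and the family spans the `2M²`-dimensional real
tangent space; hence it is a `g`-orthonormal basis of `T_{[U]}Gr_ℂ(2M,M)`. -/
theorem stmt_16 (M : ℕ) (hM : 1 ≤ M)
    (ω : ℂ) (hω : ω = Complex.exp (2 * Real.pi * Complex.I / M))
    (D S : Matrix (Fin M) (Fin M) ℂ)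
    (hD : D = Matrix.diagonal (fun j : Fin M => ω ^ (j : ℕ)))
    (hS : S = Matrix.of (fun j k : Fin M =>
      if (j : ℕ) = ((k : ℕ) + 1) % M then (1 : ℂ) else 0))
    (Δ : Fin M × Fin M × Fin 2 → Matrix (Fin M ⊕ Fin M) (Fin M) ℂ)
    (hΔ : ∀ a b : Fin M, ∀ ε : Fin 2, Δ (a, b, ε) =
      Matrix.fromRows (0 : Matrix (Fin M) (Fin M) ℂ)
        ((Complex.I ^ (ε : ℕ) * (((Real.sqrt M)⁻¹ : ℝ) : ℂ)) • (D ^ (a : ℕ) * S ^ (b : ℕ))))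
    (Δt : Fin M × Fin M × Fin 2 → Matrix (Fin M) (Fin M) ℂ)
    (hΔt : ∀ p, Δt p = Matrix.of (fun i j : Fin M => Δ p (Sum.inr i) j))
    (Ubig : Matrix (Fin M ⊕ Fin M) (Fin M) ℂ)
    (hUbig : Ubig = Matrix.fromRows (1 : Matrix (Fin M) (Fin M) ℂ) 0) :
    -- g-orthonormality of the family
    (∀ p q : Fin M × Fin M × Fin 2,
      (((Δ p)ᴴ * Δ q).trace).re = if p = q then 1 else 0) ∧
    -- each Δ lies in the tangent space at [U]
    (∀ p, Ubigᴴ * Δ p = 0) ∧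
    -- each Δ satisfies Δᴴ Δ = (1/M)·I_M
    (∀ p, (Δ p)ᴴ * Δ p = ((M : ℂ))⁻¹ • 1) ∧
    -- √M · Δ̃ is unitary
    (∀ p, (((Real.sqrt M : ℝ) : ℂ) • Δt p)ᴴ * (((Real.sqrt M : ℝ) : ℂ) • Δt p) = 1 ∧
      (((Real.sqrt M : ℝ) : ℂ) • Δt p) * (((Real.sqrt M : ℝ) : ℂ) • Δt p)ᴴ = 1) ∧
    -- the family spans the real tangent space {Δ : Uᴴ Δ = 0}
    (∀ X : Matrix (Fin M ⊕ Fin M) (Fin M) ℂ, Ubigᴴ * X = 0 →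
      X ∈ Submodule.span ℝ (Set.range Δ)) := by
  have hM0 : 0 < M := hM
  have hMne : M ≠ 0 := hM0.ne'
  have hprim : IsPrimitiveRoot ω M := hω ▸ Complex.isPrimitiveRoot_exp M hMne
  have hωM : ω ^ M = 1 := hprim.pow_eq_one
  have hω0 : ω ≠ 0 := hprim.ne_zero hMne
  have hnorm : ‖ω‖ = 1 := Complex.norm_eq_one_of_pow_eq_one hωM hMne
  have hc : star ω = ω⁻¹ := (Complex.inv_eq_conj hnorm).symm
  have hDS : ∀ (a b : ℕ) (j k : Fin M), (D ^ a * S ^ b) j k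
      = ω ^ (a * (j : ℕ)) * (if (j : ℕ) = ((k : ℕ) + b) % M then 1 else 0) :=
    fun a b j k => DS_apply hM0 D S hD hS a b j k
  have hMR0 : (0:ℝ) < (M:ℝ) := by exact_mod_cast hM0
  have hsq : (0:ℝ) < Real.sqrt M := Real.sqrt_pos.mpr hMR0
  have hsqC : ((Real.sqrt M : ℝ) : ℂ) ≠ 0 := by
    simpa using hsq.ne'
  have hMCne : (M : ℂ) ≠ 0 := by exact_mod_cast hMne
  have hrr : (((Real.sqrt M)⁻¹ : ℝ) : ℂ) * (((Real.sqrt M)⁻¹ : ℝ) : ℂ) = (M:ℂ)⁻¹ := by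
    rw [← Complex.ofReal_mul, ← mul_inv, Real.mul_self_sqrt (le_of_lt hMR0)]
    push_cast
    ring
  -- scalar products
  have hscal : ∀ ε δ : Fin 2,
      star (Complex.I ^ (ε : ℕ) * (((Real.sqrt M)⁻¹ : ℝ) : ℂ))
        * (Complex.I ^ (δ : ℕ) * (((Real.sqrt M)⁻¹ : ℝ) : ℂ))
      = Complex.I ^ (δ : ℕ) * (starRingEnd ℂ (Complex.I ^ (ε : ℕ))) * (M:ℂ)⁻¹ := by
    intro ε δ
    rw [star_mul', Complex.star_def, Complex.conj_ofReal]
    linear_combination (Complex.I ^ (δ:ℕ) * (starRingEnd ℂ) (Complex.I ^ (ε:ℕ))) * hrr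
  -- the product ΔᴴΔ structure
  have hprod : ∀ (a b c d : Fin M) (ε δ : Fin 2),
      (Δ (a,b,ε))ᴴ * Δ (c,d,δ)
      = (star (Complex.I ^ (ε : ℕ) * (((Real.sqrt M)⁻¹ : ℝ) : ℂ))
          * (Complex.I ^ (δ : ℕ) * (((Real.sqrt M)⁻¹ : ℝ) : ℂ)))
        • ((D ^ (a:ℕ) * S ^ (b:ℕ))ᴴ * (D ^ (c:ℕ) * S ^ (d:ℕ))) := by
    intro a b c d ε δ
    rw [hΔ a b ε, hΔ c d δ,
      Matrix.conjTranspose_fromRows_eq_fromCols_conjTranspose,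
      Matrix.fromCols_mul_fromRows]
    simp only [Matrix.conjTranspose_zero, Matrix.zero_mul, zero_add,
      Matrix.conjTranspose_smul, Matrix.smul_mul, Matrix.mul_smul, smul_smul]
    rw [mul_comm]
  have hsc : ∀ ε : Fin 2, star (Complex.I ^ (ε:ℕ) * (((Real.sqrt M)⁻¹:ℝ):ℂ))
      * (Complex.I ^ (ε:ℕ) * (((Real.sqrt M)⁻¹:ℝ):ℂ)) = (M:ℂ)⁻¹ := by
    intro ε
    rw [star_mul', Complex.star_def, Complex.conj_ofReal]
    have hI : (starRingEnd ℂ) (Complex.I ^ (ε:ℕ)) * Complex.I ^ (ε:ℕ) = 1 := by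
      fin_cases ε <;> simp
    calc (starRingEnd ℂ) (Complex.I ^ (ε:ℕ)) * (((Real.sqrt M)⁻¹:ℝ):ℂ)
        * (Complex.I ^ (ε:ℕ) * (((Real.sqrt M)⁻¹:ℝ):ℂ))
        = ((starRingEnd ℂ) (Complex.I ^ (ε:ℕ)) * Complex.I ^ (ε:ℕ))
          * ((((Real.sqrt M)⁻¹:ℝ):ℂ) * (((Real.sqrt M)⁻¹:ℝ):ℂ)) := by ring
      _ = (M:ℂ)⁻¹ := by rw [hI, one_mul, hrr]
  refine ⟨?_, ?_, ?_, ?_, ?_⟩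
  · -- orthonormality
    rintro ⟨a, b, ε⟩ ⟨c, d, δ⟩
    rw [hprod a b c d ε δ, Matrix.trace_smul, trace_DS hM0 hprim hc hDS a b c d,
      hscal ε δ]
    by_cases habd : a = c ∧ b = d
    · obtain ⟨rfl, rfl⟩ := habd
      rw [if_pos ⟨rfl, rfl⟩, smul_eq_mul]
      have hval : Complex.I ^ (δ:ℕ) * (starRingEnd ℂ) (Complex.I ^ (ε:ℕ)) * (M:ℂ)⁻¹
          * (M:ℂ) = Complex.I ^ (δ:ℕ) * (starRingEnd ℂ) (Complex.I ^ (ε:ℕ)) := by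
        field_simp
      rw [hval]
      fin_cases ε <;> fin_cases δ <;>
        simp [Prod.ext_iff, Complex.ext_iff]
    · rw [if_neg habd, if_neg (by
        intro h
        obtain ⟨h1, h2⟩ := Prod.mk.injEq .. ▸ h
        exact habd ⟨h1, (Prod.mk.injEq .. ▸ h2).1⟩), smul_zero, Complex.zero_re]
  · -- tangent space
    rintro ⟨a, b, ε⟩
    rw [hUbig, hΔ a b ε,
      Matrix.conjTranspose_fromRows_eq_fromCols_conjTranspose,
      Matrix.fromCols_mul_fromRows]
    simp
  · -- ΔᴴΔ = M⁻¹ • 1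
    rintro ⟨a, b, ε⟩
    rw [hprod a b a b ε ε, DS_unitary hM0 hω0 hc hDS (a:ℕ) (b:ℕ), hsc ε]
  · -- unitarity of rescaled lower block
    rintro ⟨a, b, ε⟩
    have hΔtv : Δt (a,b,ε)
        = (Complex.I ^ (ε:ℕ) * (((Real.sqrt M)⁻¹ : ℝ):ℂ)) • (D ^ (a:ℕ) * S ^ (b:ℕ)) := by
      rw [hΔt, hΔ]
      ext i j
      simp
    set z : ℂ := ((Real.sqrt M : ℝ) : ℂ) * (Complex.I ^ (ε:ℕ) * (((Real.sqrt M)⁻¹ : ℝ):ℂ))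
      with hzdef
    have hz : star z * z = 1 := by
      have hzz : star z * z = (((Real.sqrt M:ℝ):ℂ) * ((Real.sqrt M:ℝ):ℂ))
          * (star (Complex.I ^ (ε:ℕ) * (((Real.sqrt M)⁻¹:ℝ):ℂ))
            * (Complex.I ^ (ε:ℕ) * (((Real.sqrt M)⁻¹:ℝ):ℂ))) := by
        rw [hzdef, star_mul',
          show star ((Real.sqrt M:ℝ):ℂ) = ((Real.sqrt M:ℝ):ℂ) by
            simp [Complex.star_def, Complex.conj_ofReal]]
        ring
      rw [hzz, hsc ε, ← Complex.ofReal_mul, Real.mul_self_sqrt hMR0.le]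
      have : ((M:ℝ):ℂ) = (M:ℂ) := by push_cast; ring
      rw [this]
      exact mul_inv_cancel₀ hMCne
    have hWu : (D ^ (a:ℕ) * S ^ (b:ℕ))ᴴ * (D ^ (a:ℕ) * S ^ (b:ℕ)) = 1 :=
      DS_unitary hM0 hω0 hc hDS (a:ℕ) (b:ℕ)
    have hsmul : ((Real.sqrt M : ℝ):ℂ) • Δt (a,b,ε)
        = z • (D ^ (a:ℕ) * S ^ (b:ℕ)) := by
      rw [hΔtv, smul_smul, hzdef]
    constructor
    · rw [hsmul, Matrix.conjTranspose_smul, Matrix.smul_mul, Matrix.mul_smul,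
        smul_smul, hWu, hz, one_smul]
    · rw [hsmul]
      have hWu' : (D ^ (a:ℕ) * S ^ (b:ℕ)) * (D ^ (a:ℕ) * S ^ (b:ℕ))ᴴ = 1 :=
        mul_eq_one_comm.mp hWu
      rw [Matrix.conjTranspose_smul, Matrix.smul_mul, Matrix.mul_smul,
        smul_smul, hWu', mul_comm, hz, one_smul]
  · -- spanning
    intro X hX
    have hmemW : ∀ (a b : Fin M) (c : ℂ),
        Matrix.fromRows 0 (c • (D ^ (a:ℕ) * S ^ (b:ℕ)))
          ∈ Submodule.span ℝ (Set.range Δ) := by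
      intro a b c
      have h1 : ((Real.sqrt M : ℝ) : ℂ) * (((Real.sqrt M)⁻¹ : ℝ) : ℂ) = 1 := by
        rw [← Complex.ofReal_mul, mul_inv_cancel₀ hsq.ne']
        norm_num
      have heq : Matrix.fromRows (0 : Matrix (Fin M) (Fin M) ℂ)
            (c • (D ^ (a:ℕ) * S ^ (b:ℕ)))
          = (Real.sqrt M * c.re) • Δ (a, b, 0) + (Real.sqrt M * c.im) • Δ (a, b, 1) := by
        rw [hΔ, hΔ]
        ext u j
        cases u with
        | inl i => simp
        | inr i =>
          simp only [Matrix.add_apply, Matrix.smul_apply, Matrix.fromRows_apply_inr,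
            smul_eq_mul, Complex.real_smul, Fin.isValue, Fin.val_zero, Fin.val_one,
            pow_zero, pow_one, one_mul]
          have key : (c.re : ℂ) + (c.im : ℂ) * Complex.I = c := Complex.re_add_im c
          have h1' : ((Real.sqrt M:ℝ):ℂ) * ((Real.sqrt M:ℝ):ℂ)⁻¹ = 1 :=
            mul_inv_cancel₀ hsqC
          push_cast
          set w := (D ^ (a:ℕ) * S ^ (b:ℕ)) i j
          linear_combination (-(w)) * key
            + (-((c.re:ℂ) + (c.im:ℂ) * Complex.I) * w) * h1'
      rw [heq]
      exact Submodule.add_mem _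
        (Submodule.smul_mem _ _ (Submodule.subset_span ⟨(a,b,0), rfl⟩))
        (Submodule.smul_mem _ _ (Submodule.subset_span ⟨(a,b,1), rfl⟩))
    have hfr_sum : ∀ (f : Fin M → Matrix (Fin M) (Fin M) ℂ),
        Matrix.fromRows (0 : Matrix (Fin M) (Fin M) ℂ) (∑ a : Fin M, f a)
          = ∑ a : Fin M, Matrix.fromRows 0 (f a) := by
      intro f; ext u l
      cases u with
      | inl i => simp [Matrix.sum_apply]
      | inr i => simp [Matrix.sum_apply]
    have hmem_std : ∀ (z : ℂ) (j0 k0 : Fin M),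
        Matrix.fromRows 0 (z • Matrix.single j0 k0 (1:ℂ))
          ∈ Submodule.span ℝ (Set.range Δ) := by
      intro z j0 k0
      have hb0lt : ((j0:ℕ) + M - (k0:ℕ)) % M < M := Nat.mod_lt _ hM0
      set b0 : Fin M := ⟨((j0:ℕ) + M - (k0:ℕ)) % M, hb0lt⟩ with hb0def
      have hb0 : ((k0:ℕ) + (b0:ℕ)) % M = (j0:ℕ) := by
        show ((k0:ℕ) + ((j0:ℕ) + M - (k0:ℕ)) % M) % M = (j0:ℕ)
        rw [Nat.add_mod_mod]
        have h2 : (k0:ℕ) + ((j0:ℕ) + M - (k0:ℕ)) = (j0:ℕ) + M := by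
          have := k0.isLt; omega
        rw [h2, Nat.add_mod_right, Nat.mod_eq_of_lt j0.isLt]
      have heq : z • Matrix.single j0 k0 (1:ℂ)
          = ∑ a : Fin M, (z * (ω ^ ((a:ℕ) * (j0:ℕ)))⁻¹ * (M:ℂ)⁻¹)
              • (D ^ (a:ℕ) * S ^ (b0:ℕ)) := by
        ext j k
        rw [Matrix.sum_apply]
        set ξ : ℂ := (ω ^ (j0:ℕ))⁻¹ * ω ^ (j:ℕ) with hξdef
        have hξM : ξ ^ M = 1 := by
          have hpowM : ∀ n : ℕ, (ω ^ n) ^ M = 1 := fun n => by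
            rw [← pow_mul, mul_comm, pow_mul, hωM, one_pow]
          rw [hξdef, mul_pow, inv_pow, hpowM, hpowM, inv_one, one_mul]
        have hξ1 : ξ = 1 ↔ j = j0 := by
          rw [hξdef, inv_mul_eq_one₀ (pow_ne_zero _ hω0)]
          constructor
          · intro h; exact (Fin.ext (hprim.pow_inj j0.isLt j.isLt h)).symm
          · rintro rfl; rfl
        have hterm : ∀ a : Fin M,
            ((z * (ω ^ ((a:ℕ) * (j0:ℕ)))⁻¹ * (M:ℂ)⁻¹) • (D ^ (a:ℕ) * S ^ (b0:ℕ))) j k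
            = (z * (M:ℂ)⁻¹ * (if (j:ℕ) = ((k:ℕ) + (b0:ℕ)) % M then 1 else 0))
                * ξ ^ (a:ℕ) := by
          intro a
          rw [Matrix.smul_apply, hDS, smul_eq_mul]
          rw [pow_mul' ω (a:ℕ) (j0:ℕ), pow_mul' ω (a:ℕ) (j:ℕ), ← inv_pow,
            hξdef, mul_pow]
          ring
        rw [Finset.sum_congr rfl (fun a _ => hterm a), ← Finset.mul_sum,
          sum_zeta hM0 hξM]
        rw [Matrix.smul_apply, smul_eq_mul, Matrix.single]
        simp only [Matrix.of_apply]
        by_cases hj : j = j0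
        · subst hj
          rw [if_pos (hξ1.mpr rfl)]
          by_cases hk : k = k0
          · subst hk
            rw [if_pos hb0.symm, if_pos ⟨rfl, rfl⟩]
            field_simp
          · rw [if_neg (show ¬ (j:ℕ) = ((k:ℕ) + (b0:ℕ)) % M from fun h => by
              have h2 : ((b0:ℕ) + (k:ℕ)) % M = ((b0:ℕ) + (k0:ℕ)) % M := by
                rw [Nat.add_comm (b0:ℕ) (k:ℕ), Nat.add_comm (b0:ℕ) (k0:ℕ)]
                exact h.symm.trans hb0.symm
              exact hk (Fin.ext (mod_cancel k.isLt k0.isLt h2))),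
              if_neg (fun h => hk h.2.symm)]
            ring
        · rw [if_neg (fun h => hj (hξ1.mp h)),
            if_neg (fun h => hj h.1.symm)]
          ring
      rw [heq, hfr_sum]
      refine Submodule.sum_mem _ (fun a _ => hmemW a b0 _)
    have htop : ∀ i k, X (Sum.inl i) k = 0 := by
      intro i k
      have h := congrFun (congrFun hX i) k
      rw [Matrix.mul_apply, Fintype.sum_sum_type] at h
      simp only [hUbig, Matrix.conjTranspose_apply, Matrix.fromRows_apply_inl,
        Matrix.fromRows_apply_inr, Matrix.zero_apply, star_zero, zero_mul,
        Finset.sum_const_zero, add_zero, Matrix.one_apply,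
        apply_ite (star : ℂ → ℂ), star_one, ite_mul, one_mul] at h
      simpa [Finset.sum_ite_eq'] using h
    have hXdec : X = ∑ j : Fin M, ∑ k : Fin M,
        Matrix.fromRows 0 ((X (Sum.inr j) k) • Matrix.single j k (1:ℂ)) := by
      ext u l
      cases u with
      | inl i => simp [Matrix.sum_apply, htop i l]
      | inr i =>
        simp [Matrix.sum_apply, Matrix.single, mul_ite, mul_one, mul_zero,
          ite_and, Finset.sum_ite_eq, Finset.sum_ite_eq']
    rw [hXdec]
    exact Submodule.sum_mem _ (fun j _ => Submodule.sum_mem _ (fun k _ => hmem_std _ j k))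
end
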